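/- Let μ ∈ C³ with μ1+μ2+μ3 = 0 and μi − μj ∉ Z for all i ≠ j, and let ℓ1, ℓ2 ∈ N₀ = {0,1,2,…}. Then the iterated residue of F̃0 at u1 = −μ1 − ℓ1 and u2 = μ3 − ℓ2 is given by lim_{u2 → μ3−ℓ2} (u2 − μ3 + ℓ2) · [ lim_{u1 → −μ1−ℓ1} (u1 + μ1 + ℓ1) F̃0((u1,u2), μ) ] = (4/π⁴) cos⁰(μ) · ((−1)^{ℓ1+ℓ2}/(ℓ1! ℓ2!)) · (Γ(μ3−μ1−ℓ1) Γ(μ3−μ1−ℓ2)/Γ(μ3−μ1−ℓ1−ℓ2)) · Γ(μ2−μ1−ℓ1) Γ(μ3−μ2−ℓ2). -/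

import Mathlib

open scoped BigOperators Topology

/-- `cos⁰(μ) = (2/π) Π_{i<j} cos((π/2)(μi−μj))`. -/
noncomputable def cos0 (μ : Fin 3 → ℂ) : ℂ :=
  (2 / (Real.pi : ℂ)) *
    (Complex.cos ((Real.pi : ℂ) / 2 * (μ 0 - μ 1)) *
      Complex.cos ((Real.pi : ℂ) / 2 * (μ 0 - μ 2)) *
      Complex.cos ((Real.pi : ℂ) / 2 * (μ 1 - μ 2)))

/-- `F̃0(u,μ) = (4/π⁴) cos⁰(μ) (Π_i Γ(u1+μi) Γ(u2−μi)) / Γ(u1+u2)`. -/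
noncomputable def Ftilde0 (u1 u2 : ℂ) (μ : Fin 3 → ℂ) : ℂ :=
  (4 / (Real.pi : ℂ) ^ 4) * cos0 μ *
    (∏ i, Complex.Gamma (u1 + μ i) * Complex.Gamma (u2 - μ i)) /
    Complex.Gamma (u1 + u2)
open Filter Complex

lemma tendsto_punctured_add (a c : ℂ) :
    Tendsto (fun s : ℂ => s + c) (𝓝[≠] a) (𝓝[≠] (a + c)) := by
  rw [_root_.tendsto_nhdsWithin_iff]
  constructor
  · exact ((continuous_add_right c).tendsto a).mono_left nhdsWithin_le_nhds
  · filter_upwards [self_mem_nhdsWithin] with s hs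
    simpa using sub_ne_zero.mp (by simpa [sub_ne_zero] using hs)

lemma gamma_residue (n : ℕ) :
    Tendsto (fun s : ℂ => (s + n) * Complex.Gamma s) (𝓝[≠] (-(n : ℂ)))
      (𝓝 ((-1) ^ n / n.factorial)) := by
  induction n with
  | zero =>
    have h1 : Tendsto (fun s : ℂ => Complex.Gamma (s + 1)) (𝓝[≠] (0 : ℂ)) (𝓝 1) := by
      have : ContinuousAt (fun s : ℂ => Complex.Gamma (s + 1)) 0 := by
        refine (Complex.differentiableAt_Gamma _ (fun m => ?_)).continuousAt.comp
          ((continuous_add_right (1:ℂ)).continuousAt)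
        intro h
        have : (1 : ℂ) = -(m : ℂ) := by simpa using h
        have := this
        norm_cast at this
        have h3 : ((1 : ℤ) : ℂ) = ((-(m : ℤ) : ℤ) : ℂ) := by push_cast; assumption
        have h4 := Int.cast_injective (α := ℂ) h3
        omega
      simpa [Complex.Gamma_one] using this.tendsto.mono_left nhdsWithin_le_nhds
    have h2 : Tendsto (fun s : ℂ => (s + ((0:ℕ):ℂ)) * Complex.Gamma s) (𝓝[≠] (-((0:ℕ):ℂ))) (𝓝 1) := by
      simp only [Nat.cast_zero, add_zero, neg_zero]
      refine h1.congr' ?_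
      filter_upwards [self_mem_nhdsWithin] with s hs
      rw [Complex.Gamma_add_one s hs]
    simpa using h2
  | succ n ih =>
    have hne : (-(((n : ℕ) + 1 : ℕ) : ℂ)) ≠ 0 :=
      neg_ne_zero.mpr (Nat.cast_ne_zero.mpr (Nat.succ_ne_zero n))
    have htrans : Tendsto (fun s : ℂ => s + 1) (𝓝[≠] (-(((n:ℕ)+1:ℕ) : ℂ))) (𝓝[≠] (-(n:ℂ))) := by
      have := tendsto_punctured_add (-(((n:ℕ)+1:ℕ) : ℂ)) 1
      rwa [show (-(((n:ℕ)+1:ℕ) : ℂ)) + 1 = -(n:ℂ) by push_cast; ring] at this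
    have h2 : Tendsto (fun s : ℂ => ((s + 1) + n) * Complex.Gamma (s + 1))
        (𝓝[≠] (-(((n:ℕ)+1:ℕ) : ℂ))) (𝓝 ((-1) ^ n / n.factorial)) := ih.comp htrans
    have h3 : Tendsto (fun s : ℂ => s⁻¹) (𝓝[≠] (-(((n:ℕ)+1:ℕ) : ℂ)))
        (𝓝 ((-(((n:ℕ)+1:ℕ) : ℂ))⁻¹)) :=
      (continuousAt_inv₀ hne).tendsto.mono_left nhdsWithin_le_nhds
    have h4 := h2.mul h3
    have hs0 : ∀ᶠ s : ℂ in 𝓝[≠] (-(((n:ℕ)+1:ℕ) : ℂ)), s ≠ 0 := by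
      have : {s : ℂ | s ≠ 0} ∈ 𝓝 (-(((n:ℕ)+1:ℕ) : ℂ)) :=
        (isOpen_ne).mem_nhds hne
      exact nhdsWithin_le_nhds this
    have heq : (fun s : ℂ => (((s + 1) + n) * Complex.Gamma (s + 1)) * s⁻¹)
        =ᶠ[𝓝[≠] (-(((n:ℕ)+1:ℕ) : ℂ))]
        (fun s : ℂ => (s + ((n:ℕ)+1:ℕ)) * Complex.Gamma s) := by
      filter_upwards [hs0] with s hs
      rw [Complex.Gamma_add_one s hs]
      push_cast
      field_simp
      ring
    have h5 := h4.congr' heq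
    have hval : ((-1:ℂ) ^ n / n.factorial) * (-(((n:ℕ)+1:ℕ) : ℂ))⁻¹
        = (-1) ^ (n+1) / ((n+1).factorial : ℂ) := by
      have hf : ((n.factorial : ℂ)) ≠ 0 := by exact_mod_cast n.factorial_ne_zero
      have hn1 : (((n:ℕ)+1:ℕ) : ℂ) ≠ 0 := by exact_mod_cast (Nat.succ_ne_zero n)
      rw [inv_neg, Nat.factorial_succ, pow_succ]
      push_cast
      field_simp
    rwa [hval] at h5

/-- The iterated residue of `F̃0` at `u1 = −μ1 − ℓ1`, `u2 = μ3 − ℓ2`; the inner limit is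
expressed via `limUnder`, which is the limit whenever it exists. -/
theorem ftilde0_residue_double (μ : Fin 3 → ℂ) (hμ : μ 0 + μ 1 + μ 2 = 0)
    (hdist : ∀ i j, i ≠ j → ∀ k : ℤ, μ i - μ j ≠ (k : ℂ)) (ℓ1 ℓ2 : ℕ) :
    Filter.Tendsto
      (fun u2 : ℂ => (u2 - μ 2 + (ℓ2 : ℂ)) *
        limUnder (𝓝[≠] (-μ 0 - (ℓ1 : ℂ)))
          (fun u1 : ℂ => (u1 + μ 0 + (ℓ1 : ℂ)) * Ftilde0 u1 u2 μ))
      (𝓝[≠] (μ 2 - (ℓ2 : ℂ)))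
      (𝓝 ((4 / (Real.pi : ℂ) ^ 4) * cos0 μ *
        ((-1) ^ (ℓ1 + ℓ2) / ((Nat.factorial ℓ1 : ℂ) * (Nat.factorial ℓ2 : ℂ))) *
        (Complex.Gamma (μ 2 - μ 0 - (ℓ1 : ℂ)) * Complex.Gamma (μ 2 - μ 0 - (ℓ2 : ℂ)) /
          Complex.Gamma (μ 2 - μ 0 - (ℓ1 : ℂ) - (ℓ2 : ℂ))) *
        Complex.Gamma (μ 1 - μ 0 - (ℓ1 : ℂ)) * Complex.Gamma (μ 2 - μ 1 - (ℓ2 : ℂ)))) := by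
  have hnp : ∀ i j, i ≠ j → ∀ l m : ℕ, μ i - μ j - (l : ℂ) ≠ -(m : ℂ) := by
    intro i j hij l m h
    refine hdist i j hij ((l : ℤ) - (m : ℤ)) ?_
    push_cast
    linear_combination h
  -- the value of the inner limit, as a function of u2
  set L : ℂ → ℂ := fun u2 =>
    (-1) ^ ℓ1 / (ℓ1.factorial : ℂ) * Complex.Gamma (μ 1 - μ 0 - (ℓ1 : ℂ)) *
      Complex.Gamma (μ 2 - μ 0 - (ℓ1 : ℂ)) * (Complex.Gamma (u2 - μ 0 - (ℓ1 : ℂ)))⁻¹ *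
      (4 / (Real.pi : ℂ) ^ 4 * cos0 μ *
        (Complex.Gamma (u2 - μ 0) * Complex.Gamma (u2 - μ 1) * Complex.Gamma (u2 - μ 2)))
    with hLdef
  have inner : ∀ u2 : ℂ, Tendsto
      (fun u1 : ℂ => (u1 + μ 0 + (ℓ1 : ℂ)) * Ftilde0 u1 u2 μ)
      (𝓝[≠] (-μ 0 - (ℓ1 : ℂ))) (𝓝 (L u2)) := by
    intro u2
    have t1 : Tendsto (fun u1 : ℂ => (u1 + μ 0 + (ℓ1 : ℂ)) * Complex.Gamma (u1 + μ 0))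
        (𝓝[≠] (-μ 0 - (ℓ1 : ℂ))) (𝓝 ((-1) ^ ℓ1 / (ℓ1.factorial : ℂ))) := by
      have htr := tendsto_punctured_add (-μ 0 - (ℓ1 : ℂ)) (μ 0)
      rw [show -μ 0 - (ℓ1 : ℂ) + μ 0 = -(ℓ1 : ℂ) by ring] at htr
      exact (gamma_residue ℓ1).comp htr
    have t2 : Tendsto (fun u1 : ℂ => Complex.Gamma (u1 + μ 1)) (𝓝[≠] (-μ 0 - (ℓ1 : ℂ)))
        (𝓝 (Complex.Gamma (μ 1 - μ 0 - (ℓ1 : ℂ)))) := by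
      have hc : ContinuousAt Complex.Gamma (μ 1 - μ 0 - (ℓ1 : ℂ)) :=
        (Complex.differentiableAt_Gamma _ (hnp 1 0 (by decide) ℓ1)).continuousAt
      have ht : Tendsto (fun u1 : ℂ => u1 + μ 1) (𝓝[≠] (-μ 0 - (ℓ1 : ℂ)))
          (𝓝 (μ 1 - μ 0 - (ℓ1 : ℂ))) := by
        have := ((continuous_add_right (μ 1)).tendsto (-μ 0 - (ℓ1 : ℂ))).mono_left
          (nhdsWithin_le_nhds (s := {(-μ 0 - (ℓ1 : ℂ))}ᶜ))
        rwa [show -μ 0 - (ℓ1 : ℂ) + μ 1 = μ 1 - μ 0 - (ℓ1 : ℂ) by ring] at this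
      exact hc.tendsto.comp ht
    have t3 : Tendsto (fun u1 : ℂ => Complex.Gamma (u1 + μ 2)) (𝓝[≠] (-μ 0 - (ℓ1 : ℂ)))
        (𝓝 (Complex.Gamma (μ 2 - μ 0 - (ℓ1 : ℂ)))) := by
      have hc : ContinuousAt Complex.Gamma (μ 2 - μ 0 - (ℓ1 : ℂ)) :=
        (Complex.differentiableAt_Gamma _ (hnp 2 0 (by decide) ℓ1)).continuousAt
      have ht : Tendsto (fun u1 : ℂ => u1 + μ 2) (𝓝[≠] (-μ 0 - (ℓ1 : ℂ)))
          (𝓝 (μ 2 - μ 0 - (ℓ1 : ℂ))) := by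
        have := ((continuous_add_right (μ 2)).tendsto (-μ 0 - (ℓ1 : ℂ))).mono_left
          (nhdsWithin_le_nhds (s := {(-μ 0 - (ℓ1 : ℂ))}ᶜ))
        rwa [show -μ 0 - (ℓ1 : ℂ) + μ 2 = μ 2 - μ 0 - (ℓ1 : ℂ) by ring] at this
      exact hc.tendsto.comp ht
    have t4 : Tendsto (fun u1 : ℂ => (Complex.Gamma (u1 + u2))⁻¹) (𝓝[≠] (-μ 0 - (ℓ1 : ℂ)))
        (𝓝 ((Complex.Gamma (u2 - μ 0 - (ℓ1 : ℂ)))⁻¹)) := by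
      have hc : Continuous fun s : ℂ => (Complex.Gamma s)⁻¹ :=
        Complex.differentiable_one_div_Gamma.continuous
      have ht : Tendsto (fun u1 : ℂ => u1 + u2) (𝓝[≠] (-μ 0 - (ℓ1 : ℂ)))
          (𝓝 (u2 - μ 0 - (ℓ1 : ℂ))) := by
        have := ((continuous_add_right u2).tendsto (-μ 0 - (ℓ1 : ℂ))).mono_left
          (nhdsWithin_le_nhds (s := {(-μ 0 - (ℓ1 : ℂ))}ᶜ))
        rwa [show -μ 0 - (ℓ1 : ℂ) + u2 = u2 - μ 0 - (ℓ1 : ℂ) by ring] at this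
      exact (hc.tendsto _).comp ht
    have tc : Tendsto (fun _ : ℂ => 4 / (Real.pi : ℂ) ^ 4 * cos0 μ *
        (Complex.Gamma (u2 - μ 0) * Complex.Gamma (u2 - μ 1) * Complex.Gamma (u2 - μ 2)))
        (𝓝[≠] (-μ 0 - (ℓ1 : ℂ)))
        (𝓝 (4 / (Real.pi : ℂ) ^ 4 * cos0 μ *
          (Complex.Gamma (u2 - μ 0) * Complex.Gamma (u2 - μ 1) * Complex.Gamma (u2 - μ 2)))) :=
      tendsto_const_nhds
    have comb := ((((t1.mul t2).mul t3).mul t4).mul tc)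
    refine comb.congr fun u1 => ?_
    simp only [Ftilde0, Fin.prod_univ_three]
    ring
  haveI : (𝓝[≠] (-μ 0 - (ℓ1 : ℂ))).NeBot := by
    exact Module.punctured_nhds_neBot ℂ ℂ _
  have hLval : ∀ u2 : ℂ, limUnder (𝓝[≠] (-μ 0 - (ℓ1 : ℂ)))
      (fun u1 : ℂ => (u1 + μ 0 + (ℓ1 : ℂ)) * Ftilde0 u1 u2 μ) = L u2 :=
    fun u2 => (inner u2).limUnder_eq
  -- outer limit
  have s1 : Tendsto (fun u2 : ℂ => (u2 - μ 2 + (ℓ2 : ℂ)) * Complex.Gamma (u2 - μ 2))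
      (𝓝[≠] (μ 2 - (ℓ2 : ℂ))) (𝓝 ((-1) ^ ℓ2 / (ℓ2.factorial : ℂ))) := by
    have htr := tendsto_punctured_add (μ 2 - (ℓ2 : ℂ)) (-μ 2)
    simp only [← sub_eq_add_neg] at htr
    rw [show μ 2 - (ℓ2 : ℂ) - μ 2 = -(ℓ2 : ℂ) by ring] at htr
    exact (gamma_residue ℓ2).comp htr
  have s2 : Tendsto (fun u2 : ℂ => Complex.Gamma (u2 - μ 0)) (𝓝[≠] (μ 2 - (ℓ2 : ℂ)))
      (𝓝 (Complex.Gamma (μ 2 - μ 0 - (ℓ2 : ℂ)))) := by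
    have hc : ContinuousAt Complex.Gamma (μ 2 - μ 0 - (ℓ2 : ℂ)) :=
      (Complex.differentiableAt_Gamma _ (hnp 2 0 (by decide) ℓ2)).continuousAt
    have ht : Tendsto (fun u2 : ℂ => u2 - μ 0) (𝓝[≠] (μ 2 - (ℓ2 : ℂ)))
        (𝓝 (μ 2 - μ 0 - (ℓ2 : ℂ))) := by
      have := ((continuous_sub_right (μ 0)).tendsto (μ 2 - (ℓ2 : ℂ))).mono_left
        (nhdsWithin_le_nhds (s := {(μ 2 - (ℓ2 : ℂ))}ᶜ))
      rwa [show μ 2 - (ℓ2 : ℂ) - μ 0 = μ 2 - μ 0 - (ℓ2 : ℂ) by ring] at this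
    exact hc.tendsto.comp ht
  have s3 : Tendsto (fun u2 : ℂ => Complex.Gamma (u2 - μ 1)) (𝓝[≠] (μ 2 - (ℓ2 : ℂ)))
      (𝓝 (Complex.Gamma (μ 2 - μ 1 - (ℓ2 : ℂ)))) := by
    have hc : ContinuousAt Complex.Gamma (μ 2 - μ 1 - (ℓ2 : ℂ)) :=
      (Complex.differentiableAt_Gamma _ (hnp 2 1 (by decide) ℓ2)).continuousAt
    have ht : Tendsto (fun u2 : ℂ => u2 - μ 1) (𝓝[≠] (μ 2 - (ℓ2 : ℂ)))
        (𝓝 (μ 2 - μ 1 - (ℓ2 : ℂ))) := by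
      have := ((continuous_sub_right (μ 1)).tendsto (μ 2 - (ℓ2 : ℂ))).mono_left
        (nhdsWithin_le_nhds (s := {(μ 2 - (ℓ2 : ℂ))}ᶜ))
      rwa [show μ 2 - (ℓ2 : ℂ) - μ 1 = μ 2 - μ 1 - (ℓ2 : ℂ) by ring] at this
    exact hc.tendsto.comp ht
  have s4 : Tendsto (fun u2 : ℂ => (Complex.Gamma (u2 - μ 0 - (ℓ1 : ℂ)))⁻¹)
      (𝓝[≠] (μ 2 - (ℓ2 : ℂ)))
      (𝓝 ((Complex.Gamma (μ 2 - μ 0 - (ℓ1 : ℂ) - (ℓ2 : ℂ)))⁻¹)) := by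
    have hc : Continuous fun s : ℂ => (Complex.Gamma s)⁻¹ :=
      Complex.differentiable_one_div_Gamma.continuous
    have ht : Tendsto (fun u2 : ℂ => u2 - μ 0 - (ℓ1 : ℂ)) (𝓝[≠] (μ 2 - (ℓ2 : ℂ)))
        (𝓝 (μ 2 - μ 0 - (ℓ1 : ℂ) - (ℓ2 : ℂ))) := by
      have hcont : Continuous fun u2 : ℂ => u2 - μ 0 - (ℓ1 : ℂ) :=
        (continuous_sub_right (μ 0)).sub continuous_const
      have := (hcont.tendsto (μ 2 - (ℓ2 : ℂ))).mono_left
        (nhdsWithin_le_nhds (s := {(μ 2 - (ℓ2 : ℂ))}ᶜ))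
      rwa [show μ 2 - (ℓ2 : ℂ) - μ 0 - (ℓ1 : ℂ) = μ 2 - μ 0 - (ℓ1 : ℂ) - (ℓ2 : ℂ) by ring]
        at this
    exact (hc.tendsto _).comp ht
  have sc : Tendsto (fun _ : ℂ => (-1 : ℂ) ^ ℓ1 / (ℓ1.factorial : ℂ) *
      Complex.Gamma (μ 1 - μ 0 - (ℓ1 : ℂ)) * Complex.Gamma (μ 2 - μ 0 - (ℓ1 : ℂ)) *
      (4 / (Real.pi : ℂ) ^ 4 * cos0 μ))
      (𝓝[≠] (μ 2 - (ℓ2 : ℂ)))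
      (𝓝 ((-1 : ℂ) ^ ℓ1 / (ℓ1.factorial : ℂ) *
        Complex.Gamma (μ 1 - μ 0 - (ℓ1 : ℂ)) * Complex.Gamma (μ 2 - μ 0 - (ℓ1 : ℂ)) *
        (4 / (Real.pi : ℂ) ^ 4 * cos0 μ))) := tendsto_const_nhds
  have comb := ((((s1.mul s2).mul s3).mul s4).mul sc)
  have outer : Tendsto (fun u2 : ℂ => (u2 - μ 2 + (ℓ2 : ℂ)) * L u2)
      (𝓝[≠] (μ 2 - (ℓ2 : ℂ)))
      (𝓝 ((-1) ^ ℓ2 / (ℓ2.factorial : ℂ) * Complex.Gamma (μ 2 - μ 0 - (ℓ2 : ℂ)) *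
        Complex.Gamma (μ 2 - μ 1 - (ℓ2 : ℂ)) *
        (Complex.Gamma (μ 2 - μ 0 - (ℓ1 : ℂ) - (ℓ2 : ℂ)))⁻¹ *
        ((-1 : ℂ) ^ ℓ1 / (ℓ1.factorial : ℂ) *
          Complex.Gamma (μ 1 - μ 0 - (ℓ1 : ℂ)) * Complex.Gamma (μ 2 - μ 0 - (ℓ1 : ℂ)) *
          (4 / (Real.pi : ℂ) ^ 4 * cos0 μ)))) := by
    refine comb.congr fun u2 => ?_
    simp only [hLdef]
    ring
  have hval : (4 / (Real.pi : ℂ) ^ 4) * cos0 μ *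
        ((-1) ^ (ℓ1 + ℓ2) / ((Nat.factorial ℓ1 : ℂ) * (Nat.factorial ℓ2 : ℂ))) *
        (Complex.Gamma (μ 2 - μ 0 - (ℓ1 : ℂ)) * Complex.Gamma (μ 2 - μ 0 - (ℓ2 : ℂ)) /
          Complex.Gamma (μ 2 - μ 0 - (ℓ1 : ℂ) - (ℓ2 : ℂ))) *
        Complex.Gamma (μ 1 - μ 0 - (ℓ1 : ℂ)) * Complex.Gamma (μ 2 - μ 1 - (ℓ2 : ℂ))
      = (-1) ^ ℓ2 / (ℓ2.factorial : ℂ) * Complex.Gamma (μ 2 - μ 0 - (ℓ2 : ℂ)) *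
        Complex.Gamma (μ 2 - μ 1 - (ℓ2 : ℂ)) *
        (Complex.Gamma (μ 2 - μ 0 - (ℓ1 : ℂ) - (ℓ2 : ℂ)))⁻¹ *
        ((-1 : ℂ) ^ ℓ1 / (ℓ1.factorial : ℂ) *
          Complex.Gamma (μ 1 - μ 0 - (ℓ1 : ℂ)) * Complex.Gamma (μ 2 - μ 0 - (ℓ1 : ℂ)) *
          (4 / (Real.pi : ℂ) ^ 4 * cos0 μ)) := by
    rw [pow_add]
    ring
  rw [hval]
  exact outer.congr fun u2 => by rw [hLval u2]
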